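/- There exists a Noetherian topological space X and a directed family (E_α) of constructible subsets of X such that X is the union of the E_α, every irreducible closed subset of X is contained in the closure of some E_α, yet no E_α equals X. (Counterexample to EGA I, Corollary 2.4.4.) -/
import Mathlib


open Set TopologicalSpace

/-- The open-set predicate: `∅`, `{ω}` (with `ω = none`), and cofinite sets containing `ω`. -/
def hitchIsOpen (A : Set (Option ℕ)) : Prop :=
  A = ∅ ∨ A = {none} ∨ (none ∈ A ∧ Aᶜ.Finite)

/-- The topology on `X = ℕ ∪ {ω}` (encoded as `Option ℕ`, `ω = none`). -/
def hitchTop : TopologicalSpace (Option ℕ) where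
  IsOpen := hitchIsOpen
  isOpen_univ := Or.inr (Or.inr ⟨trivial, by simp⟩)
  isOpen_inter := by
    rintro A B (rfl | rfl | ⟨hA, hAf⟩) (rfl | rfl | ⟨hB, hBf⟩)
    · exact Or.inl (Set.empty_inter _)
    · exact Or.inl (Set.empty_inter _)
    · exact Or.inl (Set.empty_inter _)
    · exact Or.inl (Set.inter_empty _)
    · exact Or.inr (Or.inl (Set.inter_self _))
    · exact Or.inr (Or.inl (Set.inter_eq_self_of_subset_left (Set.singleton_subset_iff.2 hB)))
    · exact Or.inl (Set.inter_empty _)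
    · exact Or.inr (Or.inl (Set.inter_eq_self_of_subset_right (Set.singleton_subset_iff.2 hA)))
    · exact Or.inr (Or.inr ⟨⟨hA, hB⟩, by rw [Set.compl_inter]; exact hAf.union hBf⟩)
  isOpen_sUnion := by
    intro S hS
    by_cases h : ∃ A ∈ S, none ∈ A ∧ Aᶜ.Finite
    · obtain ⟨A, hAS, hA, hAf⟩ := h
      refine Or.inr (Or.inr ⟨⟨A, hAS, hA⟩, hAf.subset ?_⟩)
      exact Set.compl_subset_compl.2 (Set.subset_sUnion_of_mem hAS)
    · by_cases h2 : ({none} : Set (Option ℕ)) ∈ S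
      · refine Or.inr (Or.inl (subset_antisymm ?_ (Set.subset_sUnion_of_mem h2)))
        rintro x ⟨A, hAS, hx⟩
        rcases hS A hAS with rfl | rfl | h3
        · exact absurd hx (by simp)
        · exact hx
        · exact absurd ⟨A, hAS, h3⟩ h
      · left
        ext x
        simp only [Set.mem_sUnion, Set.mem_empty_iff_false, iff_false, not_exists]
        rintro A ⟨hAS, hx⟩
        rcases hS A hAS with rfl | rfl | h3
        · exact hx
        · exact h2 hAS
        · exact h ⟨A, hAS, h3⟩

/-- Constructible: a finite union of locally closed sets. -/
def IsConstructibleIn {α : Type*} (t : TopologicalSpace α) (E : Set α) : Prop :=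
  ∃ S : Finset (Set α), (∀ s ∈ S, @IsLocallyClosed α t s) ∧ ⋃₀ ↑S = E

lemma hitch_cofinite {U : Set (Option ℕ)} (hU : hitchIsOpen U) {n : ℕ}
    (hn : some n ∈ U) : Uᶜ.Finite := by
  rcases hU with rfl | rfl | ⟨_, h⟩
  · exact absurd hn (by simp)
  · exact absurd hn (by simp)
  · exact h

lemma hitch_compact (s : Set (Option ℕ)) : @IsCompact (Option ℕ) hitchTop s := by
  letI := hitchTop
  by_cases h : ∃ n : ℕ, some n ∈ s
  · obtain ⟨n, hn⟩ := h
    apply isCompact_of_finite_subcover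
    intro ι U hU hsU
    classical
    obtain ⟨i₀, hi₀⟩ := mem_iUnion.1 (hsU hn)
    have hfin : (U i₀)ᶜ.Finite := hitch_cofinite (hU i₀) hi₀
    have hfin2 : (s ∩ (U i₀)ᶜ).Finite := hfin.inter_of_right _
    choose f hf using fun x : ↥(s ∩ (U i₀)ᶜ) => mem_iUnion.1 (hsU x.2.1)
    refine ⟨insert i₀ (hfin2.toFinset.attach.image
      (fun x => f ⟨x.1, hfin2.mem_toFinset.1 x.2⟩)), ?_⟩
    intro x hx
    by_cases hx0 : x ∈ U i₀
    · exact mem_iUnion₂.2 ⟨i₀, Finset.mem_insert_self _ _, hx0⟩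
    · refine mem_iUnion₂.2 ⟨f ⟨x, hx, hx0⟩, ?_, hf _⟩
      exact Finset.mem_insert.2 (Or.inr (Finset.mem_image.2
        ⟨⟨x, hfin2.mem_toFinset.2 ⟨hx, hx0⟩⟩, Finset.mem_attach _ _, rfl⟩))
  · have : s ⊆ {none} := by
      intro x hx
      cases x with
      | none => rfl
      | some n => exact absurd ⟨n, hx⟩ h
    exact ((Set.finite_singleton _).subset this).isCompact

lemma hitch_closed_some (n : ℕ) : @IsClosed (Option ℕ) hitchTop {some n} := by
  letI := hitchTop
  rw [← isOpen_compl_iff]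
  exact Or.inr (Or.inr ⟨by simp, by simpa using Set.finite_singleton (some n)⟩)

lemma hitch_closure_none :
    @closure (Option ℕ) hitchTop {(none : Option ℕ)} = Set.univ := by
  letI := hitchTop
  refine eq_univ_of_forall fun x => ?_
  rw [mem_closure_iff]
  intro U hU hx
  rcases hU with rfl | rfl | ⟨h, _⟩
  · exact absurd hx (by simp)
  · exact ⟨none, by simp⟩
  · exact ⟨none, h, rfl⟩

theorem stmt7 :
    ∃ (X : Type) (t : TopologicalSpace X) (ι : Type) (E : ι → Set X),
      @NoetherianSpace X t ∧
      (∀ i j : ι, ∃ k : ι, E i ⊆ E k ∧ E j ⊆ E k) ∧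
      (∀ i, IsConstructibleIn t (E i)) ∧
      (⋃ i, E i) = Set.univ ∧
      (∀ Z : Set X, @IsClosed X t Z → @IsIrreducible X t Z →
        ∃ i, Z ⊆ @closure X t (E i)) ∧
      (∀ i, E i ≠ Set.univ) := by
  refine ⟨Option ℕ, hitchTop, Finset (Option ℕ), fun i => ↑i, ?_, ?_, ?_, ?_, ?_, ?_⟩
  · letI := hitchTop
    rw [TopologicalSpace.noetherianSpace_iff_isCompact]
    exact hitch_compact
  · exact fun i j => ⟨i ∪ j, by simp [Finset.coe_union], by simp [Finset.coe_union]⟩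
  · intro i
    letI := hitchTop
    classical
    refine ⟨i.image (fun x => {x}), ?_, ?_⟩
    · intro s hs
      obtain ⟨x, _, rfl⟩ := Finset.mem_image.1 hs
      cases x with
      | none => exact (show @IsOpen _ hitchTop {(none : Option ℕ)} from
          Or.inr (Or.inl rfl)).isLocallyClosed
      | some n => exact (hitch_closed_some n).isLocallyClosed
    · rw [Finset.coe_image, Set.sUnion_image]
      ext x
      simp
  · exact eq_univ_of_forall fun x => mem_iUnion.2 ⟨{x}, by simp⟩
  · intro Z _ _
    refine ⟨{none}, ?_⟩
    have h1 : ((({none} : Finset (Option ℕ)) : Set (Option ℕ))) = {none} :=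
      Finset.coe_singleton _
    show Z ⊆ @closure _ hitchTop (({none} : Finset (Option ℕ)) : Set (Option ℕ))
    rw [h1, hitch_closure_none]
    exact subset_univ Z
  · intro i h
    have hf := i.finite_toSet
    rw [show ((i : Set (Option ℕ))) = Set.univ from h] at hf
    exact Set.infinite_univ hf
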